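/- Let s₊, s₋ be positive real numbers with s₊ s₋ = 2 and s₊ ≠ s₋. Then (1 + s₊²)/s₊^{4/3} ≠ (1 + s₋²)/s₋^{4/3}, where s^{4/3} = (s⁴)^{1/3} with the real cube root. -/
import Mathlib


/-- The real cube root. -/
noncomputable def cbrt (x : ℝ) : ℝ :=
  if 0 ≤ x then x ^ ((1 : ℝ) / 3) else -((-x) ^ ((1 : ℝ) / 3))

lemma cbrt_cube_of_nonneg {x : ℝ} (hx : 0 ≤ x) : (cbrt x) ^ 3 = x := by
  rw [cbrt, if_pos hx, ← Real.rpow_natCast (x ^ ((1:ℝ)/3)) 3, ← Real.rpow_mul hx]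
  norm_num

lemma cbrt_pos_of_pos {x : ℝ} (hx : 0 < x) : 0 < cbrt x := by
  rw [cbrt, if_pos hx.le]
  positivity

/-- If `s₊, s₋ > 0`, `s₊ s₋ = 2` and `s₊ ≠ s₋`, then
`(1 + s₊²)/s₊^{4/3} ≠ (1 + s₋²)/s₋^{4/3}`, where `s^{4/3} = (s⁴)^{1/3}` with the real
cube root. -/
theorem F2_values_distinct_s (sp sm : ℝ)
    (hsp : 0 < sp) (hsm : 0 < sm) (hmul : sp * sm = 2) (hne : sp ≠ sm) :
    (1 + sp ^ 2) / cbrt (sp ^ 4) ≠ (1 + sm ^ 2) / cbrt (sm ^ 4) := by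
  intro h
  have hsp4 : (0:ℝ) < sp ^ 4 := by positivity
  have hsm4 : (0:ℝ) < sm ^ 4 := by positivity
  have hcp3 : (cbrt (sp ^ 4)) ^ 3 = sp ^ 4 := cbrt_cube_of_nonneg hsp4.le
  have hcm3 : (cbrt (sm ^ 4)) ^ 3 = sm ^ 4 := cbrt_cube_of_nonneg hsm4.le
  have hcp : 0 < cbrt (sp ^ 4) := cbrt_pos_of_pos hsp4
  have hcm : 0 < cbrt (sm ^ 4) := cbrt_pos_of_pos hsm4
  have hcross : (1 + sp ^ 2) * cbrt (sm ^ 4) = (1 + sm ^ 2) * cbrt (sp ^ 4) :=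
    (div_eq_div_iff hcp.ne' hcm.ne').mp h
  have h3 : ((1 + sp ^ 2) * cbrt (sm ^ 4)) ^ 3 = ((1 + sm ^ 2) * cbrt (sp ^ 4)) ^ 3 := by
    rw [hcross]
  have hE : (1 + sp ^ 2) ^ 3 * sm ^ 4 = (1 + sm ^ 2) ^ 3 * sp ^ 4 := by
    rw [← hcm3, ← hcp3]; linear_combination h3
  have h2 : sp ^ 2 * sm ^ 2 = 4 := by nlinarith [hmul]
  have key : (sp ^ 2 - 2) ^ 3 * (sp ^ 2 + 2) = 0 := by
    linear_combination (-(sp ^ 2) ^ 2) * hE +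
      (-(sp ^ 2) ^ 3 * (sm ^ 2) ^ 2 + ((sp ^ 2) ^ 4 - (sp ^ 2) ^ 2 + sp ^ 2) * sm ^ 2
        + (sp ^ 2) ^ 3 - 4 * sp ^ 2 + 4) * h2
  have hsp2 : sp ^ 2 = 2 := by
    have h4 : (sp ^ 2 - 2) ^ 3 = 0 := by
      rcases mul_eq_zero.mp key with h4 | h4
      · exact h4
      · nlinarith
    have := pow_eq_zero_iff (n := 3) (by norm_num) |>.mp h4
    linarith
  have hsm2 : sm ^ 2 = 2 := by nlinarith [h2, hsp2]
  have : sp = sm := by nlinarith [hsp2, hsm2, hsp, hsm]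
  exact hne this
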